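/- arXiv:math/0701108 — 2 statements merged into one kernel-verified Lean document; each statement's English description precedes it below -/
import Mathlib

section
/- Let (m_n) be a sequence with m_n → ∞, and for each n let α̂_{n,1}, ..., α̂_{n,m_n} be independent with α̂_{n,j} ~ N(α_{n,j}, v_n), where v_n = n/(n_1 n_2). Suppose (n/√{m_n}) ∑_{j=1}^{m_n} α²_{n,j} → ∞. Then ∑_{j=1}^{m_n} α̂²_{n,j} = (1 + o_P(1)) ∑_{j=1}^{m_n} α²_{n,j} + m_n v_n, in the sense that (∑_j α̂²_{n,j} − m_n v_n)/(∑_j α²_{n,j}) → 1 in probability. -/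
open MeasureTheory ProbabilityTheory Real Set Finset Filter
open scoped NNReal ENNReal Topology

lemma integrable_pow_mul_exp_neg_mul_sq' {b : ℝ} (hb : 0 < b) (k : ℕ) :
    Integrable fun x : ℝ => x ^ k * rexp (-b * x ^ 2) := by
  have h : (-1 : ℝ) < k := lt_of_lt_of_le neg_one_lt_zero (Nat.cast_nonneg k)
  simpa [Real.rpow_natCast] using integrable_rpow_mul_exp_neg_mul_sq hb h

lemma tendsto_pow_mul_exp_neg_mul_sq_cocompact {b : ℝ} (hb : 0 < b) (k : ℕ) :
    Tendsto (fun x : ℝ => x ^ k * rexp (-b * x ^ 2)) (cocompact ℝ) (𝓝 0) := by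
  refine squeeze_zero_norm (fun x => ?_)
    (tendsto_rpow_abs_mul_exp_neg_mul_sq_cocompact hb k)
  rw [Real.norm_eq_abs, abs_mul, abs_of_nonneg (Real.exp_pos _).le, Real.rpow_natCast, abs_pow]

lemma integral_self_mul_exp_neg_mul_sq {b : ℝ} (hb : 0 < b) :
    ∫ x : ℝ, x * rexp (-b * x ^ 2) = 0 := by
  have hderiv : ∀ x : ℝ, HasDerivAt (fun y : ℝ => -(2 * b)⁻¹ * rexp (-b * y ^ 2))
      (x * rexp (-b * x ^ 2)) x := by
    intro x
    refine (((hasDerivAt_pow 2 x).const_mul (-b)).exp.const_mul (-(2 * b)⁻¹)).congr_deriv ?_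
    field_simp
    ring
  have hint : Integrable fun x : ℝ => x * rexp (-b * x ^ 2) := by
    simpa using integrable_pow_mul_exp_neg_mul_sq' hb 1
  have htend : Tendsto (fun y : ℝ => -(2 * b)⁻¹ * rexp (-b * y ^ 2)) (cocompact ℝ) (𝓝 0) := by
    have := (tendsto_pow_mul_exp_neg_mul_sq_cocompact hb 0).const_mul (-(2 * b)⁻¹)
    simpa using this
  rw [cocompact_eq_atBot_atTop, tendsto_sup] at htend
  have := integral_of_hasDerivAt_of_tendsto hderiv hint htend.1 htend.2
  simpa using this

lemma integral_pow_succ_succ_mul_exp_neg_mul_sq {b : ℝ} (hb : 0 < b) (k : ℕ) :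
    ∫ x : ℝ, x ^ (k + 2) * rexp (-b * x ^ 2)
      = ((k + 1 : ℝ) / (2 * b)) * ∫ x : ℝ, x ^ k * rexp (-b * x ^ 2) := by
  have hderiv : ∀ x : ℝ, HasDerivAt (fun y : ℝ => -(2 * b)⁻¹ * (y ^ (k + 1) * rexp (-b * y ^ 2)))
      (x ^ (k + 2) * rexp (-b * x ^ 2)
        - ((k + 1 : ℝ) / (2 * b)) * (x ^ k * rexp (-b * x ^ 2))) x := by
    intro x
    have h1 : HasDerivAt (fun y : ℝ => y ^ (k + 1)) ((k + 1 : ℝ) * x ^ k) x := by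
      simpa using hasDerivAt_pow (k + 1) x
    have h2 : HasDerivAt (fun y : ℝ => rexp (-b * y ^ 2))
        (rexp (-b * x ^ 2) * (-b * (2 * x))) x := by
      simpa using ((hasDerivAt_pow 2 x).const_mul (-b)).exp
    refine ((h1.mul h2).const_mul (-(2 * b)⁻¹)).congr_deriv ?_
    field_simp
    ring
  have hint : Integrable fun x : ℝ => x ^ (k + 2) * rexp (-b * x ^ 2)
      - ((k + 1 : ℝ) / (2 * b)) * (x ^ k * rexp (-b * x ^ 2)) :=
    (integrable_pow_mul_exp_neg_mul_sq' hb (k + 2)).sub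
      ((integrable_pow_mul_exp_neg_mul_sq' hb k).const_mul _)
  have htend : Tendsto (fun y : ℝ => -(2 * b)⁻¹ * (y ^ (k + 1) * rexp (-b * y ^ 2)))
      (cocompact ℝ) (𝓝 0) := by
    have := (tendsto_pow_mul_exp_neg_mul_sq_cocompact hb (k + 1)).const_mul (-(2 * b)⁻¹)
    simpa using this
  rw [cocompact_eq_atBot_atTop, tendsto_sup] at htend
  have h0 := integral_of_hasDerivAt_of_tendsto hderiv hint htend.1 htend.2
  rw [sub_zero] at h0
  rw [integral_sub (integrable_pow_mul_exp_neg_mul_sq' hb (k + 2))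
    ((integrable_pow_mul_exp_neg_mul_sq' hb k).const_mul _), integral_const_mul] at h0
  linarith

lemma integral_gaussianReal_eq {μ : ℝ} {v : ℝ≥0} (hv : v ≠ 0) (f : ℝ → ℝ) :
    ∫ x, f x ∂(gaussianReal μ v) = ∫ x, gaussianPDFReal μ v x * f x := by
  rw [gaussianReal_of_var_ne_zero _ hv]
  have h : (gaussianPDF μ v) = fun x => ((Real.toNNReal (gaussianPDFReal μ v x) : ℝ≥0) : ℝ≥0∞) := by
    funext x; rfl
  rw [h, integral_withDensity_eq_integral_smul
    ((measurable_gaussianPDFReal μ v).real_toNNReal) f]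
  congr 1
  funext x
  rw [NNReal.smul_def, smul_eq_mul, Real.coe_toNNReal _ (gaussianPDFReal_nonneg μ v x)]

lemma integrable_gaussianReal_iff {μ : ℝ} {v : ℝ≥0} (hv : v ≠ 0) (f : ℝ → ℝ) :
    Integrable f (gaussianReal μ v) ↔
      Integrable (fun x => gaussianPDFReal μ v x * f x) volume := by
  rw [gaussianReal_of_var_ne_zero _ hv]
  have h : (gaussianPDF μ v) = fun x => ((Real.toNNReal (gaussianPDFReal μ v x) : ℝ≥0) : ℝ≥0∞) := by
    funext x; rfl
  rw [h, integrable_withDensity_iff_integrable_smul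
    ((measurable_gaussianPDFReal μ v).real_toNNReal)]
  constructor <;> intro h' <;> [skip; skip] <;>
  · refine h'.congr ?_
    filter_upwards with x
    rw [NNReal.smul_def, smul_eq_mul, Real.coe_toNNReal _ (gaussianPDFReal_nonneg μ v x)]

lemma gaussianPDFReal_zero_eq {v : ℝ≥0} (hv : v ≠ 0) :
    gaussianPDFReal 0 v = fun x => (√(2 * π * v))⁻¹ * rexp (-(((2:ℝ) * v)⁻¹) * x ^ 2) := by
  funext x
  have hv' : (0:ℝ) < v := by positivity
  rw [gaussianPDFReal]
  congr 1
  rw [sub_zero]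
  field_simp

section Moments

variable {v : ℝ≥0}

lemma integral_pow_gaussianReal_zero (hv : v ≠ 0) (k : ℕ) :
    ∫ x, x ^ k ∂(gaussianReal 0 v)
      = (√(2 * π * v))⁻¹ * ∫ x : ℝ, x ^ k * rexp (-(((2:ℝ) * v)⁻¹) * x ^ 2) := by
  rw [integral_gaussianReal_eq hv, gaussianPDFReal_zero_eq hv]
  rw [← integral_const_mul]
  congr 1
  funext x
  ring

lemma norm_const_gaussian (hv : v ≠ 0) :
    (√(2 * π * v))⁻¹ * ∫ x : ℝ, rexp (-(((2:ℝ) * v)⁻¹) * x ^ 2) = 1 := by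
  have h := integral_gaussianPDFReal_eq_one 0 hv
  rw [gaussianPDFReal_zero_eq hv] at h
  simpa [integral_const_mul] using h

lemma hb_pos (hv : v ≠ 0) : (0:ℝ) < ((2:ℝ) * v)⁻¹ := by
  have : (0:ℝ) < v := lt_of_le_of_ne (v.coe_nonneg) (by exact_mod_cast (Ne.symm hv))
  positivity

lemma integral_id_gaussianReal_zero (hv : v ≠ 0) : ∫ x, x ∂(gaussianReal 0 v) = 0 := by
  have h := integral_pow_gaussianReal_zero hv 1
  simp only [pow_one] at h
  rw [h, integral_self_mul_exp_neg_mul_sq (hb_pos hv), mul_zero]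

lemma integral_sq_gaussianReal_zero (hv : v ≠ 0) : ∫ x, x ^ 2 ∂(gaussianReal 0 v) = v := by
  have h := integral_pow_gaussianReal_zero hv 2
  have h2 := integral_pow_succ_succ_mul_exp_neg_mul_sq (hb_pos hv) 0
  simp only [pow_zero, one_mul, Nat.cast_zero, zero_add] at h2
  rw [h, h2, ← mul_assoc, mul_comm ((√(2 * π * v))⁻¹), mul_assoc, norm_const_gaussian hv,
    mul_one]
  have hv' : (0:ℝ) < v := lt_of_le_of_ne (v.coe_nonneg) (by exact_mod_cast (Ne.symm hv))
  field_simp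

lemma integral_cube_gaussianReal_zero (hv : v ≠ 0) : ∫ x, x ^ 3 ∂(gaussianReal 0 v) = 0 := by
  have h := integral_pow_gaussianReal_zero hv 3
  have h2 := integral_pow_succ_succ_mul_exp_neg_mul_sq (hb_pos hv) 1
  simp only [pow_one, Nat.cast_one] at h2
  rw [h, h2, integral_self_mul_exp_neg_mul_sq (hb_pos hv)]
  ring

lemma integral_pow4_gaussianReal_zero (hv : v ≠ 0) :
    ∫ x, x ^ 4 ∂(gaussianReal 0 v) = 3 * (v:ℝ) ^ 2 := by
  have h := integral_pow_gaussianReal_zero hv 4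
  have h2 := integral_pow_succ_succ_mul_exp_neg_mul_sq (hb_pos hv) 2
  simp only [Nat.reduceAdd, Nat.cast_ofNat] at h2
  have h4 := integral_pow_succ_succ_mul_exp_neg_mul_sq (hb_pos hv) 0
  simp only [pow_zero, one_mul, Nat.cast_zero, zero_add] at h4
  rw [h, h2, h4]
  have hn := norm_const_gaussian hv
  have hv' : (0:ℝ) < v := lt_of_le_of_ne (v.coe_nonneg) (by exact_mod_cast (Ne.symm hv))
  have : (√(2 * π * v))⁻¹ * ∫ x : ℝ, rexp (-(((2:ℝ) * v)⁻¹) * x ^ 2)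
      = 1 := hn
  field_simp at this ⊢
  nlinarith [this]

lemma integrable_pow_gaussianReal_zero (hv : v ≠ 0) (k : ℕ) :
    Integrable (fun x => x ^ k) (gaussianReal 0 v) := by
  rw [integrable_gaussianReal_iff hv, gaussianPDFReal_zero_eq hv]
  have : (fun x : ℝ => (√(2 * π * v))⁻¹ * rexp (-(((2:ℝ) * v)⁻¹) * x ^ 2) * x ^ k)
      = fun x : ℝ => (√(2 * π * v))⁻¹ * (x ^ k * rexp (-(((2:ℝ) * v)⁻¹) * x ^ 2)) := by
    funext x; ring
  rw [this]
  exact (integrable_pow_mul_exp_neg_mul_sq' (hb_pos hv) k).const_mul _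

end Moments

section Shifted

variable {μ : ℝ} {v : ℝ≥0}

lemma gaussianReal_eq_map (μ : ℝ) (v : ℝ≥0) :
    gaussianReal μ v = (gaussianReal 0 v).map (· + μ) := by
  rw [gaussianReal_map_add_const, zero_add]

lemma integrable_pow_gaussianReal (μ : ℝ) (v : ℝ≥0) (k : ℕ) :
    Integrable (fun x => x ^ k) (gaussianReal μ v) := by
  rcases eq_or_ne v 0 with hv | hv
  · rw [hv, gaussianReal_zero_var]
    exact (integrable_const _).congr (ae_eq_dirac (fun x : ℝ => x ^ k)).symm
  rw [gaussianReal_eq_map μ v,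
    integrable_map_measure (by fun_prop) (by fun_prop)]
  have : ((fun x : ℝ => x ^ k) ∘ (· + μ)) = fun x : ℝ => ∑ i ∈ Finset.range (k + 1),
      (x ^ i) * (μ ^ (k - i) * (k.choose i : ℝ)) := by
    funext x
    simp [Function.comp, add_pow, mul_assoc]
  rw [this]
  exact integrable_finset_sum _ fun i _ =>
    (integrable_pow_gaussianReal_zero hv i).mul_const _

lemma integral_pow_eq_shift (μ : ℝ) {v : ℝ≥0} (k : ℕ) :
    ∫ x, x ^ k ∂(gaussianReal μ v) = ∫ x, (x + μ) ^ k ∂(gaussianReal 0 v) := by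
  rw [gaussianReal_eq_map μ v, integral_map (by fun_prop) (by fun_prop)]

lemma integral_sq_gaussianReal (μ : ℝ) (v : ℝ≥0) :
    ∫ x, x ^ 2 ∂(gaussianReal μ v) = μ ^ 2 + v := by
  rcases eq_or_ne v 0 with hv | hv
  · rw [hv, gaussianReal_zero_var, integral_dirac]; simp
  rw [integral_pow_eq_shift μ 2]
  have e : (fun x : ℝ => (x + μ) ^ 2) = fun x : ℝ => x ^ 2 + 2 * μ * x + μ ^ 2 := by
    funext x; ring
  have i1 : Integrable (fun x : ℝ => 2 * μ * x) (gaussianReal 0 v) := by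
    simpa using (integrable_pow_gaussianReal_zero hv 1).const_mul (2 * μ)
  have i2 : Integrable (fun x : ℝ => x ^ 2) (gaussianReal 0 v) :=
    integrable_pow_gaussianReal_zero hv 2
  have i21 : Integrable (fun x : ℝ => x ^ 2 + 2 * μ * x) (gaussianReal 0 v) := i2.add i1
  rw [e, integral_add i21 (integrable_const _), integral_add i2 i1,
    integral_const_mul, integral_sq_gaussianReal_zero hv]
  have h1 : ∫ x, x ∂(gaussianReal 0 v) = 0 := integral_id_gaussianReal_zero hv
  rw [h1]
  simp [add_comm]

lemma integral_pow4_gaussianReal (μ : ℝ) (v : ℝ≥0) :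
    ∫ x, x ^ 4 ∂(gaussianReal μ v) = μ ^ 4 + 6 * μ ^ 2 * v + 3 * (v:ℝ) ^ 2 := by
  rcases eq_or_ne v 0 with hv | hv
  · rw [hv, gaussianReal_zero_var, integral_dirac]; simp
  rw [integral_pow_eq_shift μ 4]
  have e : (fun x : ℝ => (x + μ) ^ 4) = fun x : ℝ =>
      x ^ 4 + 4 * μ * x ^ 3 + 6 * μ ^ 2 * x ^ 2 + 4 * μ ^ 3 * x + μ ^ 4 := by
    funext x; ring
  have i4 : Integrable (fun x : ℝ => x ^ 4) (gaussianReal 0 v) :=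
    integrable_pow_gaussianReal_zero hv 4
  have i3 : Integrable (fun x : ℝ => 4 * μ * x ^ 3) (gaussianReal 0 v) :=
    (integrable_pow_gaussianReal_zero hv 3).const_mul _
  have i2 : Integrable (fun x : ℝ => 6 * μ ^ 2 * x ^ 2) (gaussianReal 0 v) :=
    (integrable_pow_gaussianReal_zero hv 2).const_mul _
  have i1 : Integrable (fun x : ℝ => 4 * μ ^ 3 * x) (gaussianReal 0 v) := by
    simpa using (integrable_pow_gaussianReal_zero hv 1).const_mul (4 * μ ^ 3)
  have i43 : Integrable (fun x : ℝ => x ^ 4 + 4 * μ * x ^ 3) (gaussianReal 0 v) := i4.add i3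
  have i432 : Integrable (fun x : ℝ => x ^ 4 + 4 * μ * x ^ 3 + 6 * μ ^ 2 * x ^ 2)
      (gaussianReal 0 v) := i43.add i2
  have i4321 : Integrable
      (fun x : ℝ => x ^ 4 + 4 * μ * x ^ 3 + 6 * μ ^ 2 * x ^ 2 + 4 * μ ^ 3 * x)
      (gaussianReal 0 v) := i432.add i1
  rw [e, integral_add i4321 (integrable_const _),
    integral_add i432 i1, integral_add i43 i2, integral_add i4 i3,
    integral_const_mul, integral_const_mul, integral_const_mul,
    integral_pow4_gaussianReal_zero hv, integral_sq_gaussianReal_zero hv,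
    integral_cube_gaussianReal_zero hv, integral_id_gaussianReal_zero hv]
  simp
  ring

end Shifted

lemma memℒp_sq_gaussianReal (μ : ℝ) (v : ℝ≥0) :
    MemLp (fun x : ℝ => x ^ 2) 2 (gaussianReal μ v) := by
  refine (memLp_two_iff_integrable_sq (by fun_prop)).2 ?_
  have h : (fun x : ℝ => (x ^ 2) ^ 2) = fun x : ℝ => x ^ 4 := by funext x; ring
  rw [h]
  exact integrable_pow_gaussianReal μ v 4

lemma bound_aux {V A nn mm C ε T : ℝ} (hA : 0 < A) (hnn : 0 < nn) (hmm : 0 < mm)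
    (hC : 0 < C) (hε : 0 < ε) (hV : 0 ≤ V) (hVC : V ≤ C / nn)
    (hT : T = nn / Real.sqrt mm * A) :
    (4 * V * A + 2 * mm * V ^ 2) / (ε * A) ^ 2
      ≤ 4 * C / (ε ^ 2 * (nn * A)) + 2 * C ^ 2 / (ε ^ 2 * T ^ 2) := by
  have hs : 0 < Real.sqrt mm := Real.sqrt_pos.2 hmm
  have hT2 : T ^ 2 = nn ^ 2 * A ^ 2 / mm := by
    rw [hT, mul_pow, div_pow, Real.sq_sqrt hmm.le]
    ring
  have hVnn : V * nn ≤ C := by rwa [← le_div_iff₀ hnn]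
  have e1 : (4 * V * A + 2 * mm * V ^ 2) / (ε * A) ^ 2
      = 4 * V * A / (ε * A) ^ 2 + 2 * mm * V ^ 2 / (ε * A) ^ 2 := by
    rw [add_div]
  rw [e1, hT2]
  have t1 : 4 * V * A / (ε * A) ^ 2 ≤ 4 * C / (ε ^ 2 * (nn * A)) := by
    rw [div_le_div_iff₀ (by positivity) (by positivity)]
    nlinarith [mul_le_mul_of_nonneg_left hVnn (by positivity : (0:ℝ) ≤ 4 * ε ^ 2 * A ^ 2)]
  have t2 : 2 * mm * V ^ 2 / (ε * A) ^ 2 ≤ 2 * C ^ 2 / (ε ^ 2 * (nn ^ 2 * A ^ 2 / mm)) := by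
    have h2 : 2 * C ^ 2 / (ε ^ 2 * (nn ^ 2 * A ^ 2 / mm))
        = 2 * C ^ 2 * mm / (ε ^ 2 * nn ^ 2 * A ^ 2) := by
      field_simp
    rw [h2, div_le_div_iff₀ (by positivity) (by positivity)]
    have hsq : V ^ 2 * nn ^ 2 ≤ C ^ 2 := by
      nlinarith [mul_self_le_mul_self (mul_nonneg hV hnn.le) hVnn]
    nlinarith [mul_le_mul_of_nonneg_left hsq (by positivity : (0:ℝ) ≤ 2 * mm * ε ^ 2 * A ^ 2)]
  exact add_le_add t1 t2

lemma ratio_bound {n₁ n₂ c₁ c₂ : ℝ} (hc₁ : 0 < c₁) (h1 : 0 < n₁) (h2 : 0 < n₂)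
    (hr1 : c₁ ≤ n₁ / n₂) (hr2 : n₁ / n₂ ≤ c₂) :
    (n₁ + n₂) / (n₁ * n₂) ≤ ((1 + c₂) ^ 2 / c₁) / (n₁ + n₂) := by
  have hb1 : c₁ * n₂ ≤ n₁ := by rwa [← le_div_iff₀ h2]
  have hb2 : n₁ ≤ c₂ * n₂ := by rwa [← div_le_iff₀ h2]
  have hc₂ : 0 < c₂ := lt_of_lt_of_le (lt_of_lt_of_le hc₁ hr1) hr2
  rw [div_le_div_iff₀ (by positivity) (by positivity)]
  have h5 : n₁ + n₂ ≤ (1 + c₂) * n₂ := by nlinarith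
  have h3 := mul_self_le_mul_self (by positivity : (0:ℝ) ≤ n₁ + n₂) h5
  have h4 : c₁ * n₂ ^ 2 ≤ n₁ * n₂ := by nlinarith [mul_le_mul_of_nonneg_right hb1 h2.le]
  have key : (n₁ + n₂) ^ 2 ≤ ((1 + c₂) ^ 2 / c₁) * (n₁ * n₂) := by
    calc (n₁ + n₂) ^ 2 ≤ ((1 + c₂) * n₂) ^ 2 := by nlinarith
      _ = ((1 + c₂) ^ 2 / c₁) * (c₁ * n₂ ^ 2) := by field_simp
      _ ≤ ((1 + c₂) ^ 2 / c₁) * (n₁ * n₂) :=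
          mul_le_mul_of_nonneg_left h4 (by positivity)
  nlinarith [key]

lemma chebyshev_step {Ω : Type*} [MeasurableSpace Ω] (P : Measure Ω) [IsProbabilityMeasure P]
    {k : ℕ} (α : Fin k → ℝ) (X : Fin k → Ω → ℝ) (v : ℝ≥0)
    (hmeas : ∀ j, Measurable (X j))
    (hindep : iIndepFun X P)
    (hgauss : ∀ j, Measure.map (X j) P = gaussianReal (α j) v)
    {ε A : ℝ} (hε : 0 < ε) (hA : A = ∑ j, α j ^ 2) (hApos : 0 < A) :
    (P {ω | ε ≤ |(∑ j, X j ω ^ 2 - k * (v:ℝ)) / A - 1|}).toReal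
      ≤ (4 * (v:ℝ) * A + 2 * k * (v:ℝ) ^ 2) / (ε * A) ^ 2 := by
  set Y : Fin k → Ω → ℝ := fun j ω => X j ω ^ 2 with hY
  have hYmeas : ∀ j, Measurable (Y j) := fun j => (hmeas j).pow_const 2
  have hY2 : ∀ j, MemLp (Y j) 2 P := by
    intro j
    have h := memℒp_sq_gaussianReal (α j) v
    rw [← hgauss j] at h
    exact (memLp_map_measure_iff (by fun_prop) (hmeas j).aemeasurable).1 h
  have hEY : ∀ j, ∫ ω, Y j ω ∂P = α j ^ 2 + v := by
    intro j
    have h := integral_sq_gaussianReal (α j) v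
    rw [← hgauss j, integral_map (hmeas j).aemeasurable (by fun_prop)] at h
    exact h
  have hEY4 : ∀ j, ∫ ω, (Y j ω) ^ 2 ∂P = α j ^ 4 + 6 * α j ^ 2 * v + 3 * (v:ℝ) ^ 2 := by
    intro j
    have h := integral_pow4_gaussianReal (α j) v
    rw [← hgauss j, integral_map (hmeas j).aemeasurable (by fun_prop)] at h
    rw [← h]
    congr 1
    funext ω
    simp [hY]
    ring
  have hVarY : ∀ j, variance (Y j) P = 4 * α j ^ 2 * (v:ℝ) + 2 * (v:ℝ) ^ 2 := by
    intro j
    rw [variance_eq_sub (hY2 j)]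
    have h1 : (P[(Y j) ^ 2] : ℝ) = ∫ ω, (Y j ω) ^ 2 ∂P := by
      congr 1
    rw [h1, hEY4 j, hEY j]
    ring
  set S : Ω → ℝ := ∑ j, Y j with hS
  have hSapp : ∀ ω, S ω = ∑ j, X j ω ^ 2 := by
    intro ω
    rw [hS, Finset.sum_apply]
  have hS2 : MemLp S 2 P := memLp_finset_sum' _ (fun j _ => hY2 j)
  have hES : P[S] = A + k * (v:ℝ) := by
    have h0 : P[S] = ∑ j, ∫ ω, Y j ω ∂P := by
      rw [hS, ← integral_finset_sum _ (fun j _ => (hY2 j).integrable one_le_two)]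
      simp [Finset.sum_apply]
    rw [h0]
    simp_rw [hEY]
    rw [Finset.sum_add_distrib, ← hA, Finset.sum_const, Finset.card_univ, Fintype.card_fin,
      nsmul_eq_mul]
  have hVarS : variance S P = 4 * (v:ℝ) * A + 2 * k * (v:ℝ) ^ 2 := by
    rw [hS, IndepFun.variance_sum (fun j _ => hY2 j) ?_]
    · simp_rw [hVarY]
      rw [Finset.sum_add_distrib, Finset.sum_const, Finset.card_univ, Fintype.card_fin, hA,
        Finset.mul_sum]
      congr 1
      · exact Finset.sum_congr rfl fun j _ => by ring
      · rw [nsmul_eq_mul]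
        ring
    · intro i _ j _ hij
      have h := hindep.indepFun hij
      exact h.comp (measurable_id.pow_const 2) (measurable_id.pow_const 2)
  have hcheb := meas_ge_le_variance_div_sq (μ := P) hS2 (mul_pos hε hApos)
  have hset : {ω | ε ≤ |(∑ j, X j ω ^ 2 - k * (v:ℝ)) / A - 1|}
      = {ω | ε * A ≤ |S ω - P[S]|} := by
    have hES' : ∫ x, ∑ j, X j x ^ 2 ∂P = A + k * (v:ℝ) := by
      rw [← hES]
      exact integral_congr_ae (ae_of_all _ fun ω => (hSapp ω).symm)
    ext ω
    simp only [Set.mem_setOf_eq, hSapp, hES']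
    have he : (∑ j, X j ω ^ 2 - k * (v:ℝ)) / A - 1
        = (∑ j, X j ω ^ 2 - (A + k * (v:ℝ))) / A := by
      field_simp
      ring
    rw [he, abs_div, abs_of_pos hApos, le_div_iff₀ hApos]
  rw [hset]
  calc (P {ω | ε * A ≤ |S ω - P[S]|}).toReal
      ≤ (ENNReal.ofReal (variance S P / (ε * A) ^ 2)).toReal := by
        exact ENNReal.toReal_mono ENNReal.ofReal_ne_top hcheb
    _ ≤ (4 * (v:ℝ) * A + 2 * k * (v:ℝ) ^ 2) / (ε * A) ^ 2 := by
        rw [ENNReal.toReal_ofReal_eq_iff.2]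
        · rw [hVarS]
        · exact div_nonneg (variance_nonneg _ _) (by positivity)

/-- If `m_n → ∞`, the `α̂_{n,j} ~ N(α_{n,j}, v_n)` (`v_n = n/(n₁ n₂)`) are independent, the
sample sizes are comparable, and `(n/√m_n) ∑ α²_{n,j} → ∞`, then
`∑ α̂²_{n,j} = (1 + o_P(1)) ∑ α²_{n,j} + m_n v_n`, i.e.
`(∑ α̂²_{n,j} - m_n v_n)/∑ α²_{n,j} → 1` in probability. -/
theorem sum_sq_gaussian_concentration
    {Ω : Type*} [MeasurableSpace Ω] (P : Measure Ω) [IsProbabilityMeasure P]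
    (m n₁ n₂ : ℕ → ℕ) (c₁ c₂ : ℝ) (hc₁ : 0 < c₁) (hc₂ : 0 < c₂)
    (hn₁ : ∀ N, 0 < n₁ N) (hn₂ : ∀ N, 0 < n₂ N)
    (hratio : ∀ N, c₁ ≤ (n₁ N : ℝ) / (n₂ N) ∧ (n₁ N : ℝ) / (n₂ N) ≤ c₂)
    (hm : Tendsto m atTop atTop)
    (α : (N : ℕ) → Fin (m N) → ℝ)
    (X : (N : ℕ) → Fin (m N) → Ω → ℝ)
    (hmeas : ∀ (N : ℕ) (j : Fin (m N)), Measurable (X N j))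
    (hindep : ∀ N : ℕ, iIndepFun (X N) P)
    (hgauss : ∀ (N : ℕ) (j : Fin (m N)), Measure.map (X N j) P =
      gaussianReal (α N j) (((n₁ N : ℝ≥0) + n₂ N) / ((n₁ N : ℝ≥0) * n₂ N)))
    (hsignal : Tendsto (fun N : ℕ =>
      (((n₁ N : ℝ) + n₂ N) / Real.sqrt (m N)) * ∑ j, (α N j) ^ 2) atTop atTop) :
    ∀ ε > (0 : ℝ),
      Tendsto (fun N : ℕ =>
        (P {ω | ε ≤ |(∑ j, (X N j ω) ^ 2 -
            (m N : ℝ) * (((n₁ N : ℝ) + n₂ N) / ((n₁ N : ℝ) * n₂ N))) /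
          (∑ j, (α N j) ^ 2) - 1|}).toReal) atTop (𝓝 0) := by
  intro ε hε
  set C : ℝ := (1 + c₂) ^ 2 / c₁ with hC
  have hCpos : 0 < C := by positivity
  set T : ℕ → ℝ := fun N => (((n₁ N : ℝ) + n₂ N) / Real.sqrt (m N)) * ∑ j, (α N j) ^ 2
    with hTdef
  set A : ℕ → ℝ := fun N => ∑ j, (α N j) ^ 2 with hAdef
  set nn : ℕ → ℝ := fun N => (n₁ N : ℝ) + n₂ N with hnn
  have hnnpos : ∀ N, 0 < nn N := fun N => by
    have := hn₁ N; have := hn₂ N; positivity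
  have hT1 : ∀ᶠ N in atTop, 1 ≤ T N := hsignal.eventually_ge_atTop 1
  have hm1 : ∀ᶠ N in atTop, 1 ≤ m N := hm.eventually_ge_atTop 1
  -- the majorant
  set g : ℕ → ℝ := fun N => 4 * C / (ε ^ 2 * (nn N * A N)) + 2 * C ^ 2 / (ε ^ 2 * (T N) ^ 2)
    with hg
  -- A is eventually positive etc.
  have hgood : ∀ᶠ N in atTop, 0 < A N ∧ Real.sqrt (m N) ≥ 1 ∧ nn N * A N = T N * Real.sqrt (m N) := by
    filter_upwards [hT1, hm1] with N h1 h2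
    have hs1 : (1:ℝ) ≤ Real.sqrt (m N) := by
      rw [show (1:ℝ) = Real.sqrt 1 from (Real.sqrt_one).symm]
      exact Real.sqrt_le_sqrt (by exact_mod_cast h2)
    have hspos : (0:ℝ) < Real.sqrt (m N) := lt_of_lt_of_le zero_lt_one hs1
    have hApos : 0 < A N := by
      rcases lt_or_eq_of_le (Finset.sum_nonneg (fun j _ => sq_nonneg (α N j)) :
        (0:ℝ) ≤ A N) with h | h
      · exact h
      · exfalso
        have : T N = 0 := by rw [hTdef]; simp only [← hAdef, ← h]; ring
        linarith
    refine ⟨hApos, hs1, ?_⟩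
    rw [hTdef]
    field_simp
    rfl
  -- eventual bound
  have hbound : ∀ᶠ N in atTop,
      (P {ω | ε ≤ |(∑ j, (X N j ω) ^ 2 -
          (m N : ℝ) * (((n₁ N : ℝ) + n₂ N) / ((n₁ N : ℝ) * n₂ N))) /
        (∑ j, (α N j) ^ 2) - 1|}).toReal ≤ g N := by
    filter_upwards [hgood, hT1, hm1] with N hN hTN hmN
    obtain ⟨hApos, hs1, hprod⟩ := hN
    set v : ℝ≥0 := ((n₁ N : ℝ≥0) + n₂ N) / ((n₁ N : ℝ≥0) * n₂ N) with hv
    have hvco : (v : ℝ) = ((n₁ N : ℝ) + n₂ N) / ((n₁ N : ℝ) * n₂ N) := by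
      rw [hv]; push_cast; rfl
    have hcheb := chebyshev_step P (α N) (X N) v (hmeas N) (hindep N) (hgauss N)
      hε (rfl : A N = ∑ j, α N j ^ 2) hApos
    rw [hvco] at hcheb
    refine le_trans hcheb ?_
    have hVC : ((n₁ N : ℝ) + n₂ N) / ((n₁ N : ℝ) * n₂ N) ≤ C / nn N := by
      rw [hC, hnn]
      exact ratio_bound hc₁ (by exact_mod_cast hn₁ N) (by exact_mod_cast hn₂ N)
        (hratio N).1 (hratio N).2
    have hmpos : (0:ℝ) < (m N : ℝ) := by exact_mod_cast hmN
    have hVnonneg : (0:ℝ) ≤ ((n₁ N : ℝ) + n₂ N) / ((n₁ N : ℝ) * n₂ N) := by positivity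
    have hTform : T N = nn N / Real.sqrt (m N) * A N := by rw [hTdef]
    exact bound_aux hApos (hnnpos N) hmpos hCpos hε hVnonneg hVC hTform
  -- the majorant tends to zero
  have hnnA : Tendsto (fun N => nn N * A N) atTop atTop := by
    refine tendsto_atTop_mono' atTop ?_ hsignal
    filter_upwards [hgood, hT1] with N hN hTN
    obtain ⟨hApos, hs1, hprod⟩ := hN
    rw [hprod]
    nlinarith
  have hT2 : Tendsto (fun N => ε ^ 2 * (T N) ^ 2) atTop atTop := by
    refine Tendsto.const_mul_atTop (by positivity) ?_
    have := hsignal.atTop_mul_atTop₀ hsignal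
    simpa [pow_two] using this
  have hd1 : Tendsto (fun N => ε ^ 2 * (nn N * A N)) atTop atTop :=
    Tendsto.const_mul_atTop (by positivity) hnnA
  have hg0 : Tendsto g atTop (𝓝 0) := by
    have h1 : Tendsto (fun N => 4 * C / (ε ^ 2 * (nn N * A N))) atTop (𝓝 0) :=
      tendsto_const_nhds.div_atTop hd1
    have h2 : Tendsto (fun N => 2 * C ^ 2 / (ε ^ 2 * (T N) ^ 2)) atTop (𝓝 0) :=
      tendsto_const_nhds.div_atTop hT2
    simpa using h1.add h2
  exact tendsto_of_tendsto_of_tendsto_of_le_of_le' tendsto_const_nhds hg0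
    (Eventually.of_forall fun N => ENNReal.toReal_nonneg) hbound
end

section
/- Let α̂_j ~ N(α_j, n/(n_1 n_2)) independently for j ∈ A^c, where |A^c| = p − m, max_{j ∈ A^c} |α_j| < b_n, and log(p − m)/[n(b_n − max_{j ∈ A^c}|α_j|)²] → 0 with n_1 n_2/n ≍ n. Then ∑_{j ∈ A^c} α²_j · P(|α̂_j| ≥ b_n) → 0 as n, p → ∞, provided max_{j ∈ A^c} α²_j is bounded. -/
open MeasureTheory ProbabilityTheory Real Set Finset Filter
open scoped NNReal ENNReal Topology

lemma gauss_upper_tail (μ b : ℝ) (v : ℝ≥0) (hv : v ≠ 0) (hb : μ ≤ b) :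
    gaussianReal μ v {x | b ≤ x} ≤ ENNReal.ofReal (rexp (-(b - μ)^2 / (2*v))) := by
  have hvpos : (0:ℝ) < (v:ℝ) := by positivity
  rw [gaussianReal_apply _ hv]
  have hmono : ∀ x ∈ {x : ℝ | b ≤ x}, gaussianPDF μ v x ≤
      ENNReal.ofReal (rexp (-(b - μ)^2 / (2*v))) * gaussianPDF b v x := by
    intro x hx
    simp only [Set.mem_setOf_eq] at hx
    rw [gaussianPDF, gaussianPDF, ← ENNReal.ofReal_mul (by positivity)]
    refine ENNReal.ofReal_le_ofReal ?_
    rw [gaussianPDFReal, gaussianPDFReal]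
    have hexp : rexp (-(x - μ)^2 / (2*v)) ≤
        rexp (-(b - μ)^2 / (2*v)) * rexp (-(x - b)^2 / (2*v)) := by
      rw [← Real.exp_add, Real.exp_le_exp, ← add_div,
        div_le_div_iff_of_pos_right (by positivity)]
      nlinarith [mul_nonneg (sub_nonneg.2 hb) (sub_nonneg.2 hx)]
    calc (√(2 * π * (v:ℝ)))⁻¹ * rexp (-(x - μ)^2 / (2*v))
        ≤ (√(2 * π * (v:ℝ)))⁻¹ * (rexp (-(b - μ)^2 / (2*v)) * rexp (-(x - b)^2 / (2*v))) :=
          mul_le_mul_of_nonneg_left hexp (by positivity)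
      _ = rexp (-(b - μ)^2 / (2*v)) * ((√(2 * π * (v:ℝ)))⁻¹ * rexp (-(x - b)^2 / (2*v))) := by
          ring
  calc ∫⁻ x in {x : ℝ | b ≤ x}, gaussianPDF μ v x
      ≤ ∫⁻ x in {x : ℝ | b ≤ x},
          ENNReal.ofReal (rexp (-(b - μ)^2 / (2*v))) * gaussianPDF b v x :=
        setLIntegral_mono ((measurable_gaussianPDF b v).const_mul _) hmono
    _ = ENNReal.ofReal (rexp (-(b - μ)^2 / (2*v))) * ∫⁻ x in {x : ℝ | b ≤ x}, gaussianPDF b v x :=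
        lintegral_const_mul _ (measurable_gaussianPDF b v)
    _ ≤ ENNReal.ofReal (rexp (-(b - μ)^2 / (2*v))) * 1 := by
        gcongr
        rw [← lintegral_gaussianPDF_eq_one b hv]
        exact setLIntegral_le_lintegral _ _
    _ = _ := mul_one _

lemma gauss_lower_tail (μ b : ℝ) (v : ℝ≥0) (hv : v ≠ 0) (hb : -b ≤ μ) :
    gaussianReal μ v {x | x ≤ -b} ≤ ENNReal.ofReal (rexp (-(b + μ)^2 / (2*v))) := by
  have hvpos : (0:ℝ) < (v:ℝ) := by positivity
  rw [gaussianReal_apply _ hv]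
  have hmono : ∀ x ∈ {x : ℝ | x ≤ -b}, gaussianPDF μ v x ≤
      ENNReal.ofReal (rexp (-(b + μ)^2 / (2*v))) * gaussianPDF (-b) v x := by
    intro x hx
    simp only [Set.mem_setOf_eq] at hx
    rw [gaussianPDF, gaussianPDF, ← ENNReal.ofReal_mul (by positivity)]
    refine ENNReal.ofReal_le_ofReal ?_
    rw [gaussianPDFReal, gaussianPDFReal]
    have hexp : rexp (-(x - μ)^2 / (2*v)) ≤
        rexp (-(b + μ)^2 / (2*v)) * rexp (-(x - -b)^2 / (2*v)) := by
      rw [← Real.exp_add, Real.exp_le_exp, ← add_div,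
        div_le_div_iff_of_pos_right (by positivity)]
      nlinarith [mul_nonneg (by linarith : (0:ℝ) ≤ μ + b) (by linarith : (0:ℝ) ≤ -b - x)]
    calc (√(2 * π * (v:ℝ)))⁻¹ * rexp (-(x - μ)^2 / (2*v))
        ≤ (√(2 * π * (v:ℝ)))⁻¹ * (rexp (-(b + μ)^2 / (2*v)) * rexp (-(x - -b)^2 / (2*v))) :=
          mul_le_mul_of_nonneg_left hexp (by positivity)
      _ = rexp (-(b + μ)^2 / (2*v)) * ((√(2 * π * (v:ℝ)))⁻¹ * rexp (-(x - -b)^2 / (2*v))) := by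
          ring
  calc ∫⁻ x in {x : ℝ | x ≤ -b}, gaussianPDF μ v x
      ≤ ∫⁻ x in {x : ℝ | x ≤ -b},
          ENNReal.ofReal (rexp (-(b + μ)^2 / (2*v))) * gaussianPDF (-b) v x :=
        setLIntegral_mono ((measurable_gaussianPDF (-b) v).const_mul _) hmono
    _ = ENNReal.ofReal (rexp (-(b + μ)^2 / (2*v))) *
          ∫⁻ x in {x : ℝ | x ≤ -b}, gaussianPDF (-b) v x :=
        lintegral_const_mul _ (measurable_gaussianPDF (-b) v)
    _ ≤ ENNReal.ofReal (rexp (-(b + μ)^2 / (2*v))) * 1 := by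
        gcongr
        rw [← lintegral_gaussianPDF_eq_one (-b) hv]
        exact setLIntegral_le_lintegral _ _
    _ = _ := mul_one _

lemma gauss_two_sided (μ a b : ℝ) (v : ℝ≥0) (hv : v ≠ 0) (hμ : |μ| ≤ a) (hab : a ≤ b) :
    (gaussianReal μ v {x | b ≤ |x|}).toReal ≤ 2 * rexp (-(b - a)^2 / (2*v)) := by
  have hvpos : (0:ℝ) < (v:ℝ) := by positivity
  have habs := abs_le.1 hμ
  have hsub : {x : ℝ | b ≤ |x|} ⊆ {x : ℝ | b ≤ x} ∪ {x : ℝ | x ≤ -b} := by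
    intro x hx
    simp only [Set.mem_setOf_eq, Set.mem_union] at *
    rcases abs_cases x with ⟨h1, _⟩ | ⟨h1, _⟩
    · left; linarith
    · right; linarith
  have key : ∀ c : ℝ, b - a ≤ c → rexp (-c^2 / (2*v)) ≤ rexp (-(b - a)^2 / (2*v)) := by
    intro c hc
    rw [Real.exp_le_exp]
    have hba : (0:ℝ) ≤ b - a := by linarith
    have : (b - a)^2 ≤ c^2 := by nlinarith
    rw [div_le_div_iff_of_pos_right (by positivity)]
    linarith
  have h1 : gaussianReal μ v {x | b ≤ |x|} ≤
      ENNReal.ofReal (rexp (-(b - a)^2 / (2*v))) + ENNReal.ofReal (rexp (-(b - a)^2 / (2*v))) := by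
    refine le_trans (measure_mono hsub) (le_trans (measure_union_le _ _) ?_)
    gcongr
    · exact le_trans (gauss_upper_tail μ b v hv (by linarith))
        (ENNReal.ofReal_le_ofReal (key _ (by linarith)))
    · exact le_trans (gauss_lower_tail μ b v hv (by linarith))
        (ENNReal.ofReal_le_ofReal (key _ (by linarith)))
  refine ENNReal.toReal_le_of_le_ofReal (by positivity) (le_trans h1 ?_)
  rw [← ENNReal.ofReal_add (by positivity) (by positivity)]
  exact ENNReal.ofReal_le_ofReal (by linarith)

/-- For independent `α̂_j ~ N(α_j, n/(n₁n₂))`, `j ∈ Aᶜ` with `|Aᶜ| = p - m`, if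
`max_{j ∈ Aᶜ} |α_j| < b_n`, `log(p - m)/[n (b_n - max_j |α_j|)²] → 0`, and
`max_j α²_j` is bounded, then `∑_{j ∈ Aᶜ} α²_j P(|α̂_j| ≥ b_n) → 0` as `n, p → ∞`. -/
theorem noise_coordinates_tail_sum_vanishes
    (p m n₁ n₂ : ℕ → ℕ) (c₁ c₂ : ℝ) (hc₁ : 0 < c₁) (hc₂ : 0 < c₂)
    (hn₁ : ∀ N, 0 < n₁ N) (hn₂ : ∀ N, 0 < n₂ N)
    (hratio : ∀ N, c₁ ≤ (n₁ N : ℝ) / (n₂ N) ∧ (n₁ N : ℝ) / (n₂ N) ≤ c₂)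
    (hngrow : Tendsto (fun N => n₁ N + n₂ N) atTop atTop)
    (hpm : ∀ N, m N < p N)
    (hpmgrow : Tendsto (fun N => p N - m N) atTop atTop)
    (α : (N : ℕ) → Fin (p N - m N) → ℝ) (b : ℕ → ℝ)
    (hmax : ∀ N, (⨆ j, |α N j|) < b N)
    (hlog : Tendsto (fun N => Real.log ((p N - m N : ℕ) : ℝ) /
      (((n₁ N + n₂ N : ℕ) : ℝ) * (b N - ⨆ j, |α N j|) ^ 2)) atTop (𝓝 0))
    (hbdd : ∃ B : ℝ, ∀ (N : ℕ) (j : Fin (p N - m N)), (α N j) ^ 2 ≤ B) :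
    Tendsto (fun N => ∑ j, (α N j) ^ 2 *
        ((gaussianReal (α N j) (((n₁ N : ℝ≥0) + n₂ N) / ((n₁ N : ℝ≥0) * n₂ N)))
          {x | b N ≤ |x|}).toReal)
      atTop (𝓝 0) := by
  classical
  obtain ⟨B, hB⟩ := hbdd
  set κ := c₁ / (1 + c₂)^2 with hκdef
  have hκ : 0 < κ := by positivity
  have hne : ∀ N, Nonempty (Fin (p N - m N)) := fun N =>
    Fin.pos_iff_nonempty.mp (by have := hpm N; omega)
  have hB0 : 0 ≤ B := le_trans (sq_nonneg _) (hB 0 (hne 0).some)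
  have hab : ∀ N (j : Fin (p N - m N)), |α N j| ≤ ⨆ j, |α N j| := fun N j => by
    haveI := hne N
    exact le_ciSup (f := fun j => |α N j|) (Set.Finite.bddAbove (Set.finite_range _)) j
  have ha0 : ∀ N, 0 ≤ ⨆ j, |α N j| := fun N =>
    le_trans (abs_nonneg _) (hab N (hne N).some)
  set a : ℕ → ℝ := fun N => ⨆ j, |α N j| with hadef
  set nn : ℕ → ℝ := fun N => ((n₁ N + n₂ N : ℕ) : ℝ) with hnndef
  have hnn : ∀ N, 0 < nn N := fun N => by
    have := hn₁ N; simp only [hnndef]; positivity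
  set D : ℕ → ℝ := fun N => nn N * (b N - a N)^2 with hDdef
  have hba : ∀ N, 0 < b N - a N := fun N => sub_pos.2 (hmax N)
  have hDpos : ∀ N, 0 < D N := fun N => mul_pos (hnn N) (pow_pos (hba N) 2)
  set pm : ℕ → ℝ := fun N => ((p N - m N : ℕ) : ℝ) with hpmdef
  have hpm1 : ∀ N, 1 ≤ pm N := fun N => by
    have := hpm N
    simp only [hpmdef, Nat.one_le_cast]
    omega
  have hpmpos : ∀ N, 0 < pm N := fun N => lt_of_lt_of_le one_pos (hpm1 N)
  set ρ : ℕ → ℝ := fun N => Real.log (pm N) / D N with hρdef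
  have hlogρ : Tendsto ρ atTop (𝓝 0) := hlog
  have hDρ : ∀ N, D N * ρ N = Real.log (pm N) := fun N => by
    simp only [hρdef]
    rw [mul_comm, div_mul_cancel₀ _ (hDpos N).ne']
  -- variance facts
  set v : ℕ → ℝ≥0 := fun N => ((n₁ N : ℝ≥0) + n₂ N) / ((n₁ N : ℝ≥0) * n₂ N) with hvdef
  have hvne : ∀ N, v N ≠ 0 := fun N => by
    have h1 := hn₁ N; have h2 := hn₂ N
    simp only [hvdef, ne_eq, div_eq_zero_iff, not_or]
    refine ⟨by positivity, fun h => ?_⟩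
    rcases mul_eq_zero.mp h with h | h
    · have := Nat.cast_eq_zero.mp h; omega
    · have := Nat.cast_eq_zero.mp h; omega
  have hvR : ∀ N, (v N : ℝ) = nn N / ((n₁ N : ℝ) * (n₂ N : ℝ)) := fun N => by
    simp only [hvdef, hnndef]
    push_cast
    ring_nf
  have hκn : ∀ N, κ * nn N * (v N : ℝ) ≤ 1 := by
    intro N
    have hx1 : (0:ℝ) < (n₁ N : ℝ) := Nat.cast_pos.2 (hn₁ N)
    have hx2 : (0:ℝ) < (n₂ N : ℝ) := Nat.cast_pos.2 (hn₂ N)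
    obtain ⟨hr1, hr2⟩ := hratio N
    have h1 : c₁ * (n₂ N : ℝ) ≤ (n₁ N : ℝ) := by
      rw [le_div_iff₀ hx2] at hr1; linarith
    have h2 : (n₁ N : ℝ) ≤ c₂ * (n₂ N : ℝ) := by
      rw [div_le_iff₀ hx2] at hr2; linarith
    have hkey : κ * ((n₁ N : ℝ) + (n₂ N : ℝ))^2 ≤ (n₁ N : ℝ) * (n₂ N : ℝ) := by
      rw [hκdef, div_mul_eq_mul_div, div_le_iff₀ (by positivity)]
      have e1 : ((n₁ N : ℝ) + (n₂ N : ℝ))^2 ≤ ((c₂ + 1) * (n₂ N : ℝ))^2 := by nlinarith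
      have e2 : c₁ * (n₂ N : ℝ)^2 ≤ (n₁ N : ℝ) * (n₂ N : ℝ) := by nlinarith
      nlinarith [mul_le_mul_of_nonneg_left e1 hc₁.le,
        mul_le_mul_of_nonneg_left e2 (sq_nonneg (c₂ + 1))]
    have hnneq : nn N = (n₁ N : ℝ) + (n₂ N : ℝ) := by rw [hnndef]; push_cast; ring
    rw [hvR N, hnneq]
    rw [show κ * ((n₁ N : ℝ) + (n₂ N : ℝ)) * (((n₁ N : ℝ) + (n₂ N : ℝ)) / ((n₁ N : ℝ) * (n₂ N : ℝ)))
        = κ * ((n₁ N : ℝ) + (n₂ N : ℝ))^2 / ((n₁ N : ℝ) * (n₂ N : ℝ)) by field_simp]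
    rw [div_le_one (by positivity)]
    exact hkey
  -- per-N bound
  have hterm : ∀ N, (∑ j, (α N j) ^ 2 *
      ((gaussianReal (α N j) (v N)) {x | b N ≤ |x|}).toReal)
      ≤ pm N * (B * (2 * rexp (-(κ/2) * D N))) := by
    intro N
    have hvpos : (0:ℝ) < (v N : ℝ) := by
      have := hvne N; positivity
    have hexp : -(b N - a N)^2 / (2 * (v N : ℝ)) ≤ -(κ/2) * D N := by
      rw [div_le_iff₀ (by positivity)]
      have := mul_le_mul_of_nonneg_right (hκn N) (sq_nonneg (b N - a N))
      simp only [hDdef]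
      nlinarith [this]
    have hj : ∀ j : Fin (p N - m N), (α N j) ^ 2 *
        ((gaussianReal (α N j) (v N)) {x | b N ≤ |x|}).toReal
        ≤ B * (2 * rexp (-(κ/2) * D N)) := by
      intro j
      have ht := gauss_two_sided (α N j) (a N) (b N) (v N) (hvne N) (hab N j) (hmax N).le
      have ht2 : ((gaussianReal (α N j) (v N)) {x | b N ≤ |x|}).toReal
          ≤ 2 * rexp (-(κ/2) * D N) := by
        refine le_trans ht ?_
        have := Real.exp_le_exp.2 hexp
        linarith
      exact mul_le_mul (hB N j) ht2 ENNReal.toReal_nonneg hB0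
    calc (∑ j, (α N j) ^ 2 * ((gaussianReal (α N j) (v N)) {x | b N ≤ |x|}).toReal)
        ≤ (Finset.univ (α := Fin (p N - m N))).card • (B * (2 * rexp (-(κ/2) * D N))) :=
          Finset.sum_le_card_nsmul _ _ _ (fun j _ => hj j)
      _ = pm N * (B * (2 * rexp (-(κ/2) * D N))) := by
          rw [nsmul_eq_mul, Finset.card_univ, Fintype.card_fin]
  -- D → ∞
  have hDtop : Tendsto D atTop atTop := by
    rw [tendsto_atTop]
    intro M
    have hδ : (0:ℝ) < (max M 1)⁻¹ := by positivity
    filter_upwards [hpmgrow.eventually_ge_atTop 3, hlogρ.eventually (gt_mem_nhds hδ)]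
      with N hN3 hNρ
    have hpm3 : (3:ℝ) ≤ pm N := by
      simp only [hpmdef]
      exact_mod_cast hN3
    have hlog1 : 1 ≤ Real.log (pm N) := by
      rw [Real.le_log_iff_exp_le (by linarith)]
      have := Real.exp_one_lt_d9
      linarith
    have hchain : 1 ≤ D N * (max M 1)⁻¹ := by
      calc (1:ℝ) ≤ Real.log (pm N) := hlog1
        _ = D N * ρ N := (hDρ N).symm
        _ ≤ D N * (max M 1)⁻¹ := mul_le_mul_of_nonneg_left hNρ.le (hDpos N).le
    have : max M 1 ≤ D N := by
      rw [← div_eq_mul_inv, le_div_iff₀ (by positivity), one_mul] at hchain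
      exact hchain
    exact le_trans (le_max_left _ _) this
  -- exponent → -∞
  have hE : Tendsto (fun N => Real.log (pm N) - κ/2 * D N) atTop atBot := by
    have heq : (fun N => Real.log (pm N) - κ/2 * D N)
        = fun N => D N * (ρ N - κ/2) := funext fun N => by
      linear_combination -(hDρ N)
    rw [heq]
    exact Tendsto.atTop_mul_neg (C := 0 - κ/2) (by linarith) hDtop (hlogρ.sub_const (κ/2))
  have hexp0 : Tendsto (fun N => B * (2 * rexp (Real.log (pm N) - κ/2 * D N)))
      atTop (𝓝 0) := by
    have h := Real.tendsto_exp_atBot.comp hE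
    have h2 := (h.const_mul 2).const_mul B
    simpa using h2
  refine squeeze_zero (fun N => Finset.sum_nonneg (fun j _ =>
      mul_nonneg (sq_nonneg _) ENNReal.toReal_nonneg)) (fun N => ?_) hexp0
  refine le_trans (hterm N) (le_of_eq ?_)
  rw [show Real.log (pm N) - κ/2 * D N = Real.log (pm N) + (-(κ/2) * D N) by ring,
    Real.exp_add, Real.exp_log (hpmpos N)]
  ring
end
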